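/- Gauss's summation theorem: if Re(γ-α-β) > 0 and γ is not a nonpositive integer, then Σ_{m=0}^{∞} (α)_m (β)_m / ((γ)_m m!) = Γ(γ)Γ(γ-α-β)/(Γ(γ-α)Γ(γ-β)). -/

import Mathlib

open Complex Polynomial

noncomputable def poch (x : ℂ) (m : ℕ) : ℂ := (ascPochhammer ℂ m).eval x

open Filter Finset Topology


lemma poch_zero (x : ℂ) : poch x 0 = 1 := by simp [poch]

lemma poch_succ (x : ℂ) (n : ℕ) : poch x (n+1) = poch x n * (x + n) := by
  simp [poch, ascPochhammer_succ_right, mul_comm]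

lemma poch_succ_left (x : ℂ) (n : ℕ) : poch x (n+1) = x * poch (x+1) n := by
  simp [poch, ascPochhammer_succ_left, eval_mul, eval_comp]

lemma poch_eq_prod (x : ℂ) (n : ℕ) : poch x n = ∏ j ∈ range n, (x + j) := by
  induction n with
  | zero => simp [poch_zero]
  | succ n ih => rw [poch_succ, ih, prod_range_succ]

lemma poch_ne_zero {x : ℂ} (hx : ∀ k : ℕ, x ≠ -k) (n : ℕ) : poch x n ≠ 0 := by
  rw [poch_eq_prod]
  exact Finset.prod_ne_zero_iff.2 fun j _ => by
    intro h; exact hx j (by linear_combination h)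

lemma gammaSeq_eq (x : ℂ) (n : ℕ) :
    Complex.GammaSeq x n = (n:ℂ)^x * n.factorial / poch x (n+1) := by
  rw [Complex.GammaSeq, poch_eq_prod]

lemma inv_gammaSeq_eq (x : ℂ) (n : ℕ) :
    (Complex.GammaSeq x n)⁻¹ = poch x (n+1) / ((n:ℂ)^x * n.factorial) := by
  rw [gammaSeq_eq, inv_div]

lemma tendsto_inv_gammaSeq (x : ℂ) :
    Tendsto (fun n => (Complex.GammaSeq x n)⁻¹) atTop (𝓝 (Complex.Gamma x)⁻¹) := by
  by_cases hx : ∀ k : ℕ, x ≠ -k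
  · exact (Complex.GammaSeq_tendsto_Gamma x).inv₀ (Complex.Gamma_ne_zero hx)
  · push_neg at hx
    obtain ⟨k, rfl⟩ := hx
    rw [Complex.Gamma_neg_nat_eq_zero, inv_zero]
    have : ∀ n ≥ k, (Complex.GammaSeq (-(k:ℂ)) n)⁻¹ = 0 := by
      intro n hn
      rw [inv_gammaSeq_eq, poch_eq_prod]
      rw [Finset.prod_eq_zero (Finset.mem_range.2 (Nat.lt_succ_of_le hn)) (by ring)]
      simp
    refine Tendsto.congr' ?_ tendsto_const_nhds
    filter_upwards [eventually_ge_atTop k] with n hn using (this n hn).symm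

noncomputable def gterm (α β γ : ℂ) (m : ℕ) : ℂ :=
  poch α m * poch β m / (poch γ m * m.factorial)

noncomputable def gD (α β γ : ℂ) (n : ℕ) : ℂ :=
  Complex.GammaSeq γ n * (Complex.GammaSeq α n)⁻¹ * (Complex.GammaSeq β n)⁻¹

lemma tendsto_gD (α β γ : ℂ) :
    Tendsto (gD α β γ) atTop
      (𝓝 (Complex.Gamma γ * (Complex.Gamma α)⁻¹ * (Complex.Gamma β)⁻¹)) :=
  ((Complex.GammaSeq_tendsto_Gamma γ).mul (tendsto_inv_gammaSeq α)).mul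
    (tendsto_inv_gammaSeq β)

lemma cpow_nat_ne_zero {n : ℕ} (hn : 1 ≤ n) (y : ℂ) : (n:ℂ)^y ≠ 0 := by
  rw [cpow_def_of_ne_zero (Nat.cast_ne_zero.2 (by omega))]
  exact exp_ne_zero _

lemma poch_eq_inv_gammaSeq_mul (x : ℂ) {n : ℕ} (hn : 1 ≤ n) :
    poch x (n+1) = (Complex.GammaSeq x n)⁻¹ * ((n:ℂ)^x * n.factorial) := by
  rw [inv_gammaSeq_eq, div_mul_cancel₀]
  exact mul_ne_zero (cpow_nat_ne_zero hn x) (Nat.cast_ne_zero.2 n.factorial_ne_zero)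

lemma gammaSeq_ne_zero {x : ℂ} (hx : ∀ k : ℕ, x ≠ -k) {n : ℕ} (hn : 1 ≤ n) :
    Complex.GammaSeq x n ≠ 0 := by
  rw [gammaSeq_eq]
  exact div_ne_zero (mul_ne_zero (cpow_nat_ne_zero hn x)
    (Nat.cast_ne_zero.2 n.factorial_ne_zero)) (poch_ne_zero hx _)

lemma gterm_eq (α β γ : ℂ) (hγ : ∀ k : ℕ, γ ≠ -k) {n : ℕ} (hn : 1 ≤ n) :
    gterm α β γ (n+1) = (n:ℂ)^(α+β-γ) * ((n:ℂ)+1)⁻¹ * gD α β γ n := by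
  have hn0 : (n:ℂ) ≠ 0 := Nat.cast_ne_zero.2 (by omega)
  have hn1 : (n:ℂ) + 1 ≠ 0 := by
    have h2 := (Nat.cast_ne_zero (R := ℂ)).2 (Nat.succ_ne_zero n)
    push_cast at h2; exact h2
  have hfac : ((n.factorial :ℂ)) ≠ 0 := Nat.cast_ne_zero.2 n.factorial_ne_zero
  have hcp : (n:ℂ)^γ ≠ 0 := cpow_nat_ne_zero hn γ
  have hG : Complex.GammaSeq γ n ≠ 0 := gammaSeq_ne_zero hγ hn
  have hpow : (n:ℂ)^(α+β-γ) * (n:ℂ)^γ = (n:ℂ)^α * (n:ℂ)^β := by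
    rw [← cpow_add _ _ hn0, ← cpow_add _ _ hn0]; ring_nf
  rw [gterm, poch_eq_inv_gammaSeq_mul α hn, poch_eq_inv_gammaSeq_mul β hn,
    poch_eq_inv_gammaSeq_mul γ hn, Nat.factorial_succ, gD]
  rw [inv_eq_one_div (Complex.GammaSeq γ n)]
  push_cast
  generalize (Complex.GammaSeq α n)⁻¹ = A
  generalize (Complex.GammaSeq β n)⁻¹ = B
  field_simp
  linear_combination (-A * B) * hpow

lemma norm_gterm_bound (α β γ : ℂ) (hγ : ∀ k : ℕ, γ ≠ -k) :
    ∃ C : ℝ, ∀ᶠ n : ℕ in atTop, ‖gterm α β γ (n+1)‖ ≤ C * (n:ℝ)^((α+β-γ).re - 1) := by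
  set L := Complex.Gamma γ * (Complex.Gamma α)⁻¹ * (Complex.Gamma β)⁻¹
  refine ⟨‖L‖ + 1, ?_⟩
  have hD : ∀ᶠ n : ℕ in atTop, ‖gD α β γ n‖ < ‖L‖ + 1 :=
    ((tendsto_gD α β γ).norm).eventually_lt_const (lt_add_one _)
  filter_upwards [hD, eventually_ge_atTop 1] with n hDn hn1
  have hn0 : (0:ℝ) < (n:ℝ) := by exact_mod_cast hn1
  rw [gterm_eq α β γ hγ hn1]
  rw [norm_mul, norm_mul, norm_natCast_cpow_of_pos (by omega)]
  have h2 : ‖((n:ℂ)+1)⁻¹‖ ≤ (n:ℝ)⁻¹ := by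
    rw [norm_inv]
    apply inv_anti₀ hn0
    calc (n:ℝ) ≤ (n:ℝ) + 1 := by linarith
    _ = ‖((n:ℂ)) + 1‖ := by
          have e : ((n:ℂ)) + 1 = (((n:ℝ) + 1 : ℝ) : ℂ) := by push_cast; ring
          rw [e, Complex.norm_real]
          rw [Real.norm_eq_abs, abs_of_pos (by linarith)]
  have h3 : (n:ℝ) ^ ((α+β-γ).re - 1) = (n:ℝ)^((α+β-γ).re) * (n:ℝ)⁻¹ := by
    rw [Real.rpow_sub hn0, Real.rpow_one, div_eq_mul_inv]
  rw [h3]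
  calc (n:ℝ)^((α+β-γ).re) * ‖((n:ℂ)+1)⁻¹‖ * ‖gD α β γ n‖
      ≤ (n:ℝ)^((α+β-γ).re) * (n:ℝ)⁻¹ * (‖L‖+1) := by
        apply mul_le_mul (mul_le_mul le_rfl h2 (norm_nonneg _) (Real.rpow_nonneg hn0.le _))
          hDn.le (norm_nonneg _)
        positivity
    _ = (‖L‖ + 1) * ((n:ℝ)^((α+β-γ).re) * (n:ℝ)⁻¹) := by ring

lemma summable_norm_gterm (α β γ : ℂ) (h : 0 < (γ-α-β).re) (hγ : ∀ k : ℕ, γ ≠ -k) :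
    Summable (fun m => ‖gterm α β γ m‖) := by
  obtain ⟨C, hC⟩ := norm_gterm_bound α β γ hγ
  have hsum : Summable (fun n : ℕ => C * (n:ℝ)^((α+β-γ).re - 1)) := by
    apply Summable.mul_left
    refine Real.summable_nat_rpow.2 ?_
    have : (α+β-γ).re = -(γ-α-β).re := by simp [Complex.sub_re, Complex.add_re]; ring
    rw [this]; linarith
  have h1 : Summable (fun n : ℕ => ‖gterm α β γ (n+1)‖) := by
    apply hsum.of_norm_bounded_eventually
    rw [Nat.cofinite_eq_atTop]
    filter_upwards [hC] with n hn
    simpa using hn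
  exact (summable_nat_add_iff 1).1 h1

noncomputable def uu (α β γ : ℂ) (m : ℕ) : ℂ := m * (γ + m) * gterm α β (γ+1) m

lemma shift_ok {γ : ℂ} (hγ : ∀ k : ℕ, γ ≠ -k) : ∀ k : ℕ, γ + 1 ≠ -k := by
  intro k hk
  exact hγ (k+1) (by push_cast; linear_combination hk)

lemma shift_re {α β γ : ℂ} (h : 0 < (γ-α-β).re) : 0 < (γ+1-α-β).re := by
  have : (γ+1-α-β).re = (γ-α-β).re + 1 := by simp [Complex.add_re, Complex.sub_re]; ring
  rw [this]; linarith

lemma nat_succ_ne' (γ : ℂ) (hγ : ∀ k : ℕ, γ ≠ -k) (m : ℕ) : γ + m ≠ 0 := by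
  intro hc; exact hγ m (by linear_combination hc)

lemma tendsto_uu (α β γ : ℂ) (h : 0 < (γ-α-β).re) (hγ : ∀ k : ℕ, γ ≠ -k) :
    Tendsto (uu α β γ) atTop (𝓝 0) := by
  set s := (γ-α-β).re with hs
  set L := Complex.Gamma (γ+1) * (Complex.Gamma α)⁻¹ * (Complex.Gamma β)⁻¹
  rw [← Filter.tendsto_add_atTop_iff_nat 1]
  have hD : ∀ᶠ n : ℕ in atTop, ‖gD α β (γ+1) n‖ < ‖L‖ + 1 :=
    ((tendsto_gD α β (γ+1)).norm).eventually_lt_const (lt_add_one _)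
  apply squeeze_zero_norm'
    (a := fun n : ℕ => (‖γ‖ + 2) * (‖L‖ + 1) * (n:ℝ)^(-s))
  · filter_upwards [hD, eventually_ge_atTop 1] with n hDn hn1
    have hn0 : (0:ℝ) < (n:ℝ) := by exact_mod_cast hn1
    have hnc : ((n:ℂ)+1) ≠ 0 := by
      have h2 := (Nat.cast_ne_zero (R := ℂ)).2 (Nat.succ_ne_zero n)
      push_cast at h2; exact h2
    have e1 : uu α β γ (n+1) = (γ + (n+1)) * ((n:ℂ)^(α+β-(γ+1)) * gD α β (γ+1) n) := by
      rw [uu, gterm_eq α β (γ+1) (shift_ok hγ) hn1]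
      push_cast
      field_simp
    rw [e1, norm_mul, norm_mul, norm_natCast_cpow_of_pos (by omega)]
    have hb1 : ‖γ + ((n:ℂ)+1)‖ ≤ (‖γ‖ + 2) * (n:ℝ) := by
      calc ‖γ + ((n:ℂ)+1)‖ ≤ ‖γ‖ + ‖((n:ℂ)+1)‖ := norm_add_le _ _
      _ = ‖γ‖ + ((n:ℝ)+1) := by
          rw [show ((n:ℂ)+1) = (((n:ℝ)+1:ℝ):ℂ) by push_cast; ring, Complex.norm_real,
            Real.norm_eq_abs, abs_of_pos (by linarith)]
      _ ≤ (‖γ‖ + 2) * (n:ℝ) := by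
          have h1 : (1:ℝ) ≤ (n:ℝ) := by exact_mod_cast hn1
          have h2 : 0 ≤ ‖γ‖ := norm_nonneg _
          nlinarith
    have hre : (α+β-(γ+1)).re = -s - 1 := by
      rw [hs]; simp [Complex.add_re, Complex.sub_re]; ring
    rw [hre]
    have key : (n:ℝ)^(-s-1) * (n:ℝ) = (n:ℝ)^(-s) := by
      rw [Real.rpow_sub hn0, Real.rpow_one]
      field_simp
    calc ‖γ + ((n:ℂ)+1)‖ * ((n:ℝ)^(-s-1) * ‖gD α β (γ+1) n‖)
        ≤ ((‖γ‖+2) * (n:ℝ)) * ((n:ℝ)^(-s-1) * (‖L‖+1)) := by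
          apply mul_le_mul hb1 (mul_le_mul le_rfl hDn.le (norm_nonneg _)
            (Real.rpow_nonneg hn0.le _)) (by positivity) (by positivity)
      _ = (‖γ‖ + 2) * (‖L‖ + 1) * ((n:ℝ)^(-s-1) * (n:ℝ)) := by ring
      _ = (‖γ‖ + 2) * (‖L‖ + 1) * (n:ℝ)^(-s) := by rw [key]
  · have : Tendsto (fun n : ℕ => (n:ℝ)^(-s)) atTop (𝓝 0) :=
      (tendsto_rpow_neg_atTop h).comp tendsto_natCast_atTop_atTop
    simpa using this.const_mul ((‖γ‖ + 2) * (‖L‖ + 1))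

lemma key_identity (α β γ : ℂ) (hγ : ∀ k : ℕ, γ ≠ -k) (m : ℕ) :
    γ*(γ-α-β) * gterm α β γ m - (γ-α)*(γ-β) * gterm α β (γ+1) m
      = uu α β γ m - uu α β γ (m+1) := by
  have hP : poch (γ+1) m ≠ 0 := poch_ne_zero (shift_ok hγ) m
  have hPγ : poch γ m ≠ 0 := poch_ne_zero hγ m
  have hγm : γ + m ≠ 0 := nat_succ_ne' γ hγ m
  have hγm1 : γ + 1 + m ≠ 0 := nat_succ_ne' (γ+1) (shift_ok hγ) m
  have hfac : ((m.factorial:ℂ)) ≠ 0 := Nat.cast_ne_zero.2 m.factorial_ne_zero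
  have hm1 : ((m:ℂ)+1) ≠ 0 := by
    have h2 := (Nat.cast_ne_zero (R := ℂ)).2 (Nat.succ_ne_zero m)
    push_cast at h2; exact h2
  have hrel : poch γ m = γ * poch (γ+1) m / (γ + m) := by
    rw [eq_div_iff hγm, ← poch_succ, poch_succ_left]
  have hγ0 : γ ≠ 0 := by simpa using hγ 0
  have hP' : poch (1+γ) m ≠ 0 := by rw [add_comm]; exact hP
  simp only [uu, gterm, poch_succ, Nat.factorial_succ, hrel]
  push_cast
  field_simp
  ring

lemma summable_gterm (α β γ : ℂ) (h : 0 < (γ-α-β).re) (hγ : ∀ k : ℕ, γ ≠ -k) :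
    Summable (gterm α β γ) :=
  (summable_norm_gterm α β γ h hγ).of_norm

lemma contiguous_step (α β γ : ℂ) (h : 0 < (γ-α-β).re) (hγ : ∀ k : ℕ, γ ≠ -k) :
    γ*(γ-α-β) * ∑' m, gterm α β γ m
      = (γ-α)*(γ-β) * ∑' m, gterm α β (γ+1) m := by
  have S1 := summable_gterm α β γ h hγ
  have S2 := summable_gterm α β (γ+1) (shift_re h) (shift_ok hγ)
  set f := fun m => γ*(γ-α-β) * gterm α β γ m - (γ-α)*(γ-β) * gterm α β (γ+1) m with hf
  have hsum : HasSum f (γ*(γ-α-β) * ∑' m, gterm α β γ m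
      - (γ-α)*(γ-β) * ∑' m, gterm α β (γ+1) m) :=
    (S1.hasSum.mul_left _).sub (S2.hasSum.mul_left _)
  have h0 : Tendsto (fun N => ∑ m ∈ range N, f m) atTop (𝓝 0) := by
    have he : ∀ N, ∑ m ∈ range N, f m = - uu α β γ N := by
      intro N
      have : ∑ m ∈ range N, f m = ∑ m ∈ range N, (uu α β γ m - uu α β γ (m+1)) :=
        Finset.sum_congr rfl fun m _ => key_identity α β γ hγ m
      rw [this, Finset.sum_range_sub']
      have : uu α β γ 0 = 0 := by simp [uu]
      rw [this, zero_sub]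
    simp only [he]
    simpa using (tendsto_uu α β γ h hγ).neg
  have := tendsto_nhds_unique hsum.tendsto_sum_nat h0
  linear_combination this

lemma gterm_zero (α β γ : ℂ) : gterm α β γ 0 = 1 := by
  simp [gterm, poch_zero]

lemma norm_poch_le (x : ℂ) (m : ℕ) : ‖poch x m‖ ≤ ∏ j ∈ range m, (‖x‖ + j) := by
  rw [poch_eq_prod, norm_prod]
  apply Finset.prod_le_prod (fun _ _ => norm_nonneg _)
  intro j _
  calc ‖x + j‖ ≤ ‖x‖ + ‖(j:ℂ)‖ := norm_add_le _ _
  _ = ‖x‖ + j := by rw [Complex.norm_natCast]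

lemma le_norm_poch {x : ℂ} (hx : 0 ≤ x.re) (m : ℕ) :
    ∏ j ∈ range m, (x.re + j) ≤ ‖poch x m‖ := by
  rw [poch_eq_prod, norm_prod]
  apply Finset.prod_le_prod
  · intro j _; positivity
  · intro j _
    calc x.re + j = (x + j).re := by simp
    _ ≤ ‖x + j‖ := Complex.re_le_norm _
    _ = ‖x + j‖ := rfl

lemma norm_poch_real {r : ℝ} (hr : 0 ≤ r) (m : ℕ) :
    ‖poch (r:ℂ) m‖ = ∏ j ∈ range m, (r + j) := by
  refine le_antisymm ?_ ?_
  · have := norm_poch_le (r:ℂ) m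
    simpa [Complex.norm_real, Real.norm_eq_abs, _root_.abs_of_nonneg hr] using this
  · have := le_norm_poch (x := (r:ℂ)) (by simpa using hr) m
    simpa using this

lemma norm_gterm_eq (α β γ : ℂ) (m : ℕ) :
    ‖gterm α β γ m‖ = ‖poch α m‖ * ‖poch β m‖ / (‖poch γ m‖ * m.factorial) := by
  rw [gterm, norm_div, norm_mul, norm_mul, Complex.norm_natCast]

lemma norm_gterm_le_bound (α β γ : ℂ) {R : ℝ} (hR : 0 < R) (hle : R ≤ γ.re) (m : ℕ) :
    ‖gterm α β γ m‖ ≤ ‖gterm ‖α‖ ‖β‖ (R:ℂ) m‖ := by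
  rw [norm_gterm_eq, norm_gterm_eq]
  have hpR : (0:ℝ) < ∏ j ∈ range m, (R + j) := by
    apply Finset.prod_pos; intro j _; positivity
  have hRnorm : ‖poch ((R:ℝ):ℂ) m‖ = ∏ j ∈ range m, (R + j) := norm_poch_real hR.le m
  have hfac : (0:ℝ) < m.factorial := by exact_mod_cast m.factorial_pos
  apply div_le_div₀
  · positivity
  · have h1 : ‖poch α m‖ ≤ ‖poch (‖α‖:ℂ) m‖ := by
      rw [norm_poch_real (norm_nonneg α)]; exact norm_poch_le α m
    have h2 : ‖poch β m‖ ≤ ‖poch (‖β‖:ℂ) m‖ := by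
      rw [norm_poch_real (norm_nonneg β)]; exact norm_poch_le β m
    exact mul_le_mul h1 h2 (norm_nonneg _) (norm_nonneg _)
  · rw [hRnorm]; positivity
  · apply mul_le_mul _ le_rfl hfac.le (norm_nonneg _)
    rw [hRnorm]
    calc ∏ j ∈ range m, (R + j) ≤ ∏ j ∈ range m, (γ.re + j) := by
          apply Finset.prod_le_prod (fun j _ => by positivity)
            (fun j _ => by have := hle; linarith)
    _ ≤ ‖poch γ m‖ := le_norm_poch (by linarith) m

lemma tendsto_gterm_fixed (α β γ : ℂ) (m : ℕ) :
    Tendsto (fun n : ℕ => gterm α β (γ + n) (m+1)) atTop (𝓝 0) := by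
  set K := ‖poch α (m+1)‖ * ‖poch β (m+1)‖ / (m+1).factorial with hK
  apply squeeze_zero_norm' (a := fun n : ℕ => K * (γ.re + n)⁻¹)
  · filter_upwards [eventually_ge_atTop (⌈1 - γ.re⌉₊ + 1)] with n hn
    have h1 : 1 ≤ γ.re + n := by
      have h3 : (⌈1 - γ.re⌉₊ : ℝ) ≤ n := by exact_mod_cast (by omega : ⌈1 - γ.re⌉₊ ≤ n)
      have h2 := Nat.le_ceil (1 - γ.re)
      linarith
    have hpos : (0:ℝ) < γ.re + n := by linarith
    have hprod : γ.re + n ≤ ‖poch (γ + n) (m+1)‖ := by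
      refine le_trans ?_ (le_norm_poch (x := γ + n) (by simp; linarith) (m+1))
      have : γ.re + (n:ℝ) = ((γ+n).re + (0:ℕ)) := by simp
      rw [this]
      rw [Finset.prod_range_succ']
      have hrest : (1:ℝ) ≤ ∏ j ∈ range m, ((γ+(n:ℂ)).re + ((j+1:ℕ):ℝ)) := by
        calc (1:ℝ) = ∏ _j ∈ range m, (1:ℝ) := by rw [Finset.prod_const_one]
        _ ≤ _ := by
            apply Finset.prod_le_prod (fun j _ => by norm_num)
            intro j _
            simp only [Complex.add_re, Complex.natCast_re]
            have h5 : (0:ℝ) ≤ ((j:ℕ):ℝ) := Nat.cast_nonneg j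
            push_cast
            linarith
      exact le_mul_of_one_le_left (by simp; linarith) hrest
    rw [norm_gterm_eq]
    have hKeq : K * (γ.re + n)⁻¹
        = ‖poch α (m+1)‖ * ‖poch β (m+1)‖ / ((γ.re + n) * (m+1).factorial) := by
      rw [hK, ← div_eq_mul_inv, div_div, mul_comm ((m+1).factorial:ℝ)]
    rw [hKeq]
    apply div_le_div_of_nonneg_left (by positivity) (by positivity)
    have hf : (0:ℝ) < (m+1).factorial := by exact_mod_cast (m+1).factorial_pos
    exact mul_le_mul hprod le_rfl hf.le (norm_nonneg _)
  · have h1 : Tendsto (fun n : ℕ => γ.re + (n:ℝ)) atTop atTop :=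
      tendsto_atTop_add_const_left _ _ tendsto_natCast_atTop_atTop
    simpa using (h1.inv_tendsto_atTop).const_mul K

lemma ok_of_add_nat {γ : ℂ} (hγ : ∀ k : ℕ, γ ≠ -k) (n : ℕ) : ∀ k : ℕ, γ + n ≠ -k := by
  intro k hk
  apply hγ (n + k)
  push_cast
  linear_combination hk

lemma re_add_nat {α β γ : ℂ} (h : 0 < (γ-α-β).re) (n : ℕ) : 0 < (γ+n-α-β).re := by
  have e : (γ+n-α-β).re = (γ-α-β).re + n := by
    simp [Complex.add_re, Complex.sub_re]; ring
  have : (0:ℝ) ≤ n := Nat.cast_nonneg n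
  rw [e]; linarith

set_option maxHeartbeats 2000000 in

lemma tendsto_tail (α β γ : ℂ) (h : 0 < (γ-α-β).re) (hγ : ∀ k : ℕ, γ ≠ -k) :
    Tendsto (fun n : ℕ => ∑' m, gterm α β (γ + n) m) atTop (𝓝 1) := by
  obtain ⟨R, hRpos, hRre, hRok, hRge⟩ :
      ∃ R : ℝ, 0 < R ∧ 0 < ((R:ℂ) - ‖α‖ - ‖β‖).re ∧ (∀ k : ℕ, (R:ℂ) ≠ -k) ∧
        ‖α‖ + ‖β‖ + 1 ≤ R := by
    refine ⟨‖α‖ + ‖β‖ + 1 + max 0 (1 - γ.re), ?_, ?_, ?_, ?_⟩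
    · have := norm_nonneg α; have := norm_nonneg β
      have := le_max_left (0:ℝ) (1 - γ.re)
      linarith
    · have e : (((‖α‖ + ‖β‖ + 1 + max 0 (1 - γ.re) : ℝ):ℂ) - ‖α‖ - ‖β‖).re
          = 1 + max 0 (1 - γ.re) := by simp; ring
      rw [e]
      have := le_max_left (0:ℝ) (1 - γ.re)
      linarith
    · intro k hk
      have h1 : (‖α‖ + ‖β‖ + 1 + max 0 (1 - γ.re) : ℝ) = -(k:ℝ) := by exact_mod_cast hk
      have h2 : (0:ℝ) ≤ (k:ℝ) := Nat.cast_nonneg k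
      have := norm_nonneg α; have := norm_nonneg β
      have := le_max_left (0:ℝ) (1 - γ.re)
      linarith
    · have := le_max_left (0:ℝ) (1 - γ.re)
      linarith
  have hbound : Summable (fun m : ℕ => ‖gterm (‖α‖:ℂ) (‖β‖:ℂ) (R:ℂ) (m+1)‖) :=
    (summable_nat_add_iff 1).2 (summable_norm_gterm _ _ _ hRre hRok)
  have hsum_n : ∀ n : ℕ, Summable (gterm α β (γ+n)) := fun n =>
    summable_gterm α β (γ+n) (re_add_nat h n) (ok_of_add_nat hγ n)
  have key : Tendsto (fun n : ℕ => ∑' m : ℕ, gterm α β (γ+n) (m+1)) atTop (𝓝 0) := by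
    have h0 : (0:ℂ) = ∑' _m : ℕ, (0:ℂ) := by rw [tsum_zero]
    rw [h0]
    apply tendsto_tsum_of_dominated_convergence (f := fun (n : ℕ) (m : ℕ) => gterm α β (γ+n) (m+1)) (g := fun _ => (0:ℂ)) hbound (tendsto_gterm_fixed α β γ)
    filter_upwards [eventually_ge_atTop ⌈R - γ.re⌉₊] with n hn m
    have hle : R ≤ (γ+n).re := by
      have h1 : (⌈R - γ.re⌉₊:ℝ) ≤ n := by exact_mod_cast hn
      have h2 := Nat.le_ceil (R - γ.re)
      simp only [Complex.add_re, Complex.natCast_re]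
      linarith
    exact norm_gterm_le_bound α β (γ+n) hRpos hle (m+1)
  have heq : ∀ n : ℕ, ∑' m, gterm α β (γ+n) m = 1 + ∑' m, gterm α β (γ+n) (m+1) := by
    intro n
    rw [(hsum_n n).tsum_eq_zero_add, gterm_zero]
  simp only [heq]
  have := tendsto_const_nhds (α := ℕ) (f := atTop) (x := (1:ℂ)) |>.add key
  simpa using this

lemma iterate_rel (α β γ : ℂ) (h : 0 < (γ-α-β).re) (hγ : ∀ k : ℕ, γ ≠ -k) :
    ∀ n : ℕ, (∑' m, gterm α β γ m) * (poch γ n * poch (γ-α-β) n)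
      = (∑' m, gterm α β (γ+n) m) * (poch (γ-α) n * poch (γ-β) n) := by
  intro n
  induction n with
  | zero => simp [poch_zero]
  | succ n ih =>
    have hstep := contiguous_step α β (γ+n) (re_add_nat h n) (ok_of_add_nat hγ n)
    have hcast : γ + (n:ℂ) + 1 = γ + ((n+1 : ℕ):ℂ) := by push_cast; ring
    rw [hcast] at hstep
    have e1 : γ - α - β + (n:ℂ) = γ + n - α - β := by ring
    rw [poch_succ, poch_succ, poch_succ, poch_succ, e1]
    linear_combination (γ+(n:ℂ)) * (γ+(n:ℂ)-α-β) * ih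
      + (poch (γ-α) n * poch (γ-β) n) * hstep

theorem gauss_summation (α β γ : ℂ) (h : 0 < (γ - α - β).re)
    (hγ : ∀ k : ℕ, γ ≠ -k) :
    HasSum (fun m : ℕ => poch α m * poch β m / (poch γ m * (m.factorial : ℂ)))
      (Complex.Gamma γ * Complex.Gamma (γ - α - β) /
        (Complex.Gamma (γ - α) * Complex.Gamma (γ - β))) := by
  have hsum : Summable (gterm α β γ) := summable_gterm α β γ h hγ
  set S := ∑' m, gterm α β γ m with hS
  have heq : ∀ᶠ n : ℕ in atTop,
      S * ((Complex.GammaSeq γ n)⁻¹ * (Complex.GammaSeq (γ-α-β) n)⁻¹)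
        = (∑' m, gterm α β (γ+((n+1:ℕ):ℂ)) m)
          * ((Complex.GammaSeq (γ-α) n)⁻¹ * (Complex.GammaSeq (γ-β) n)⁻¹) := by
    filter_upwards [eventually_ge_atTop 1] with n hn1
    have hn0 : (n:ℂ) ≠ 0 := Nat.cast_ne_zero.2 (by omega)
    have hiter := iterate_rel α β γ h hγ (n+1)
    have hd : ((n:ℂ)^γ * n.factorial) * ((n:ℂ)^(γ-α-β) * n.factorial)
        = ((n:ℂ)^(γ-α) * n.factorial) * ((n:ℂ)^(γ-β) * n.factorial) := by
      have hp : (n:ℂ)^γ * (n:ℂ)^(γ-α-β) = (n:ℂ)^(γ-α) * (n:ℂ)^(γ-β) := by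
        rw [← cpow_add _ _ hn0, ← cpow_add _ _ hn0]; ring_nf
      linear_combination ((n.factorial:ℂ))^2 * hp
    calc S * ((Complex.GammaSeq γ n)⁻¹ * (Complex.GammaSeq (γ-α-β) n)⁻¹)
        = S * (poch γ (n+1) * poch (γ-α-β) (n+1))
            / (((n:ℂ)^γ * n.factorial) * ((n:ℂ)^(γ-α-β) * n.factorial)) := by
          rw [inv_gammaSeq_eq, inv_gammaSeq_eq, div_mul_div_comm, mul_div_assoc]
          ring
      _ = (∑' m, gterm α β (γ+((n+1:ℕ):ℂ)) m) * (poch (γ-α) (n+1) * poch (γ-β) (n+1))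
            / (((n:ℂ)^(γ-α) * n.factorial) * ((n:ℂ)^(γ-β) * n.factorial)) := by
          rw [← hS] at hiter
          rw [hd, hiter]
      _ = _ := by
          rw [inv_gammaSeq_eq, inv_gammaSeq_eq, div_mul_div_comm, mul_div_assoc]
  have hL : Tendsto (fun n : ℕ => S * ((Complex.GammaSeq γ n)⁻¹ * (Complex.GammaSeq (γ-α-β) n)⁻¹))
      atTop (𝓝 (S * ((Complex.Gamma γ)⁻¹ * (Complex.Gamma (γ-α-β))⁻¹))) :=
    tendsto_const_nhds.mul ((tendsto_inv_gammaSeq γ).mul (tendsto_inv_gammaSeq (γ-α-β)))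
  have htail : Tendsto (fun n : ℕ => ∑' m, gterm α β (γ+((n+1:ℕ):ℂ)) m) atTop (𝓝 1) :=
    (tendsto_tail α β γ h hγ).comp (tendsto_add_atTop_nat 1)
  have hR : Tendsto (fun n : ℕ => (∑' m, gterm α β (γ+((n+1:ℕ):ℂ)) m)
      * ((Complex.GammaSeq (γ-α) n)⁻¹ * (Complex.GammaSeq (γ-β) n)⁻¹))
      atTop (𝓝 (1 * ((Complex.Gamma (γ-α))⁻¹ * (Complex.Gamma (γ-β))⁻¹))) :=
    htail.mul ((tendsto_inv_gammaSeq (γ-α)).mul (tendsto_inv_gammaSeq (γ-β)))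
  have hkey : S * ((Complex.Gamma γ)⁻¹ * (Complex.Gamma (γ-α-β))⁻¹)
      = 1 * ((Complex.Gamma (γ-α))⁻¹ * (Complex.Gamma (γ-β))⁻¹) :=
    tendsto_nhds_unique (hL.congr' heq) hR
  have hΓγ : Complex.Gamma γ ≠ 0 := Complex.Gamma_ne_zero hγ
  have hΓδ : Complex.Gamma (γ-α-β) ≠ 0 := Complex.Gamma_ne_zero_of_re_pos h
  have hSval : S = Complex.Gamma γ * Complex.Gamma (γ - α - β) /
      (Complex.Gamma (γ - α) * Complex.Gamma (γ - β)) := by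
    have e2 : Complex.Gamma γ * Complex.Gamma (γ - α - β) /
        (Complex.Gamma (γ - α) * Complex.Gamma (γ - β))
        = Complex.Gamma γ * Complex.Gamma (γ-α-β)
          * ((Complex.Gamma (γ-α))⁻¹ * (Complex.Gamma (γ-β))⁻¹) := by
      rw [div_eq_mul_inv, mul_inv]
    rw [e2, ← one_mul ((Complex.Gamma (γ-α))⁻¹ * (Complex.Gamma (γ-β))⁻¹), ← hkey]
    field_simp
  have : HasSum (gterm α β γ) S := hsum.hasSum
  rwa [hSval] at this
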